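/- Let R be a commutative ring and let J be a finitely generated ideal of R. Then J is a GV-ideal if and only if J is not contained in any maximal w-ideal of R, i.e., J ⊄ m for every m ∈ w-Max(R). -/

import Mathlib

universe u v

section WDefs

variable (R : Type u) [CommRing R]

/-- The canonical `R`-linear map `R → Hom_R(J, R)`, `r ↦ (j ↦ r * j)`. -/
def gvCanonicalMap (J : Ideal R) : R →ₗ[R] (J →ₗ[R] R) where
  toFun r := r • (J.subtype)
  map_add' x y := add_smul x y _
  map_smul' r x := by simp [mul_smul]

/-- A finitely generated ideal `J` of `R` is a GV-ideal (Glaz–Vasconcelos ideal)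
if the canonical map `R → Hom_R(J, R)` is an isomorphism. -/
def IsGVIdeal (J : Ideal R) : Prop :=
  J.FG ∧ Function.Bijective (gvCanonicalMap R J)

/-- An ideal `I` of `R` is a w-ideal if whenever `J x ⊆ I` for some GV-ideal `J`,
then `x ∈ I`. -/
def IsWIdeal (I : Ideal R) : Prop :=
  ∀ x : R, (∃ J : Ideal R, IsGVIdeal R J ∧ ∀ j ∈ J, j * x ∈ I) → x ∈ I

/-- `m` is a maximal w-ideal: maximal among the proper w-ideals of `R`. -/
def IsMaxWIdeal (m : Ideal R) : Prop :=
  IsWIdeal R m ∧ m ≠ ⊤ ∧ ∀ I : Ideal R, IsWIdeal R I → I ≠ ⊤ → m ≤ I → I = m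

variable {M : Type v} [AddCommGroup M] [Module R M]

/-- `x` is a GV-torsion element if it is killed by some GV-ideal. -/
def IsGVTorsionElem (x : M) : Prop :=
  ∃ J : Ideal R, IsGVIdeal R J ∧ ∀ j ∈ J, j • x = 0

variable (M)

/-- `M` is GV-torsion-free if it has no nonzero GV-torsion element. -/
def IsGVTorsionFree : Prop := ∀ x : M, IsGVTorsionElem R x → x = 0

/-- `M` is GV-torsion if all its elements are GV-torsion. -/
def IsGVTorsion : Prop := ∀ x : M, IsGVTorsionElem R x

/-- `M` is a w-module: GV-torsion-free and every map from a GV-ideal to `M`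
extends to `R`. -/
def IsWModule : Prop :=
  IsGVTorsionFree R M ∧
    ∀ J : Ideal R, IsGVIdeal R J → ∀ f : J →ₗ[R] M,
      ∃ g : R →ₗ[R] M, ∀ x : J, g (x : R) = f x

end WDefs

section GVAux

variable {R : Type u} [CommRing R]

lemma gvMap_apply (J : Ideal R) (r : R) (x : J) : gvCanonicalMap R J r x = r * x := by
  simp [gvCanonicalMap, smul_eq_mul]

lemma gv_inj {J : Ideal R} (h : IsGVIdeal R J) {r : R} (hr : ∀ j ∈ J, r * j = 0) :
    r = 0 := by
  apply h.2.1
  ext x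
  simp [gvMap_apply, hr x x.2]

lemma gv_surj {J : Ideal R} (h : IsGVIdeal R J) (f : J →ₗ[R] R) :
    ∃ r : R, ∀ x : J, f x = r * x := by
  obtain ⟨r, hr⟩ := h.2.2 f
  exact ⟨r, fun x => by rw [← hr, gvMap_apply]⟩

lemma isGV_of {J : Ideal R} (hFG : J.FG)
    (hinj : ∀ r : R, (∀ j ∈ J, r * j = 0) → r = 0)
    (hsurj : ∀ f : J →ₗ[R] R, ∃ r : R, ∀ x : J, f x = r * x) :
    IsGVIdeal R J := by
  refine ⟨hFG, fun a b hab => ?_, fun f => ?_⟩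
  · have key : ∀ j ∈ J, (a - b) * j = 0 := by
      intro j hj
      have := congrArg (fun g => g ⟨j, hj⟩) hab
      simp only [gvMap_apply] at this
      rw [sub_mul, this, sub_self]
    exact sub_eq_zero.mp (hinj _ key)
  · obtain ⟨r, hr⟩ := hsurj f
    exact ⟨r, by ext x; rw [gvMap_apply, ← hr]⟩

lemma isGV_top : IsGVIdeal R (⊤ : Ideal R) := by
  refine isGV_of ⟨{1}, by simp⟩ (fun r hr => by simpa using hr 1 trivial) (fun f => ?_)
  refine ⟨f ⟨1, trivial⟩, fun x => ?_⟩
  have h1 : (x : R) • (⟨1, trivial⟩ : (⊤ : Ideal R)) = x := by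
    ext; simp
  conv_lhs => rw [← h1]
  rw [map_smul, smul_eq_mul]
  exact mul_comm _ _

lemma isGV_of_le {J K : Ideal R} (hFG : J.FG) (hK : IsGVIdeal R K) (hKJ : K ≤ J) :
    IsGVIdeal R J := by
  refine isGV_of hFG (fun r hr => gv_inj hK fun j hj => hr j (hKJ hj)) (fun f => ?_)
  obtain ⟨r, hr⟩ := gv_surj hK (f.comp (Submodule.inclusion hKJ))
  refine ⟨r, fun x => ?_⟩
  have key : ∀ k ∈ K, (f x - r * x) * k = 0 := by
    intro k hk
    have h1 : (⟨k * (x : R), J.mul_mem_right (x : R) (hKJ hk)⟩ : J) = k • x := by ext; simp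
    have h2 : f ⟨k * (x : R), J.mul_mem_right (x : R) (hKJ hk)⟩ = r * (k * x) := by
      have := hr ⟨k * (x : R), K.mul_mem_right (x : R) hk⟩
      exact this
    have h3 : f ⟨k * (x : R), J.mul_mem_right (x : R) (hKJ hk)⟩ = k * f x := by
      rw [h1, map_smul, smul_eq_mul]
    rw [h2] at h3
    linear_combination -h3
  exact sub_eq_zero.mp (gv_inj hK key)

lemma isGV_mul {J₁ J₂ : Ideal R} (h₁ : IsGVIdeal R J₁) (h₂ : IsGVIdeal R J₂) :
    IsGVIdeal R (J₁ * J₂) := by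
  refine isGV_of (Submodule.FG.mul h₁.1 h₂.1) (fun r hr => ?_) (fun f => ?_)
  · refine gv_inj h₁ fun j₁ hj₁ => gv_inj h₂ fun j₂ hj₂ => ?_
    have := hr (j₁ * j₂) (Ideal.mul_mem_mul hj₁ hj₂)
    linear_combination this
  · -- for each j₂ ∈ J₂, define g j₂ : J₁ →ₗ R
    have hmem : ∀ (j₁ : J₁) (j₂ : J₂), (j₁ : R) * (j₂ : R) ∈ J₁ * J₂ :=
      fun j₁ j₂ => Ideal.mul_mem_mul j₁.2 j₂.2
    let g : J₂ → (J₁ →ₗ[R] R) := fun j₂ =>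
      { toFun := fun j₁ => f ⟨(j₁ : R) * (j₂ : R), hmem j₁ j₂⟩
        map_add' := fun a b => by
          have : (⟨((a + b : J₁) : R) * (j₂ : R), hmem (a + b) j₂⟩ : J₁ * J₂)
              = ⟨(a : R) * j₂, hmem a j₂⟩ + ⟨(b : R) * j₂, hmem b j₂⟩ := by
            ext; push_cast; ring
          show f ⟨((a + b : J₁) : R) * (j₂ : R), hmem (a + b) j₂⟩ = _
          rw [this, map_add]
        map_smul' := fun c a => by
          have : (⟨((c • a : J₁) : R) * (j₂ : R), hmem (c • a) j₂⟩ : J₁ * J₂)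
              = c • ⟨(a : R) * j₂, hmem a j₂⟩ := by
            ext; push_cast [smul_eq_mul]; ring
          show f ⟨((c • a : J₁) : R) * (j₂ : R), hmem (c • a) j₂⟩ = _
          rw [this, map_smul]
          simp }
    have hg : ∀ (j₂ : J₂), ∃ r : R, ∀ j₁ : J₁, f ⟨(j₁ : R) * (j₂ : R), hmem j₁ j₂⟩ = r * j₁ :=
      fun j₂ => gv_surj h₁ (g j₂)
    choose ρ hρ using hg
    -- ρ is linear
    have hadd : ∀ a b : J₂, ρ (a + b) = ρ a + ρ b := by
      intro a b
      have key : ∀ j ∈ J₁, (ρ (a + b) - (ρ a + ρ b)) * j = 0 := by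
        intro j hj
        have h1 := hρ (a + b) ⟨j, hj⟩
        have h2 := hρ a ⟨j, hj⟩
        have h3 := hρ b ⟨j, hj⟩
        have he : (⟨j * ((a + b : J₂) : R), hmem ⟨j, hj⟩ (a + b)⟩ : J₁ * J₂)
            = ⟨j * (a : R), hmem ⟨j, hj⟩ a⟩ + ⟨j * (b : R), hmem ⟨j, hj⟩ b⟩ := by
          ext; push_cast; ring
        rw [he, map_add, h2, h3] at h1
        linear_combination -h1
      exact sub_eq_zero.mp (gv_inj h₁ key)
    have hsmul : ∀ (c : R) (a : J₂), ρ (c • a) = c * ρ a := by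
      intro c a
      have key : ∀ j ∈ J₁, (ρ (c • a) - c * ρ a) * j = 0 := by
        intro j hj
        have h1 := hρ (c • a) ⟨j, hj⟩
        have h2 := hρ a ⟨j, hj⟩
        have he : (⟨j * ((c • a : J₂) : R), hmem ⟨j, hj⟩ (c • a)⟩ : J₁ * J₂)
            = c • ⟨j * (a : R), hmem ⟨j, hj⟩ a⟩ := by
          ext; push_cast [smul_eq_mul]; ring
        rw [he, map_smul, smul_eq_mul, h2] at h1
        linear_combination -h1
      exact sub_eq_zero.mp (gv_inj h₁ key)
    let ψ : J₂ →ₗ[R] R :=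
      { toFun := ρ
        map_add' := hadd
        map_smul' := fun c a => by simpa using hsmul c a }
    obtain ⟨s, hs⟩ := gv_surj h₂ ψ
    refine ⟨s, fun x => ?_⟩
    obtain ⟨xv, hx⟩ := x
    refine Submodule.mul_induction_on' (C := fun z hz => f ⟨z, hz⟩ = s * z) ?_ ?_ hx
    · intro m hm n hn
      have h1 := hρ ⟨n, hn⟩ ⟨m, hm⟩
      have h2 : ρ ⟨n, hn⟩ = s * n := hs ⟨n, hn⟩
      rw [h1, h2]
      ring
    · intro z hz y hy hz' hy'
      have : (⟨z + y, add_mem hz hy⟩ : J₁ * J₂) = ⟨z, hz⟩ + ⟨y, hy⟩ := rfl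
      rw [this, map_add, hz', hy', mul_add]

lemma isGV_prod {ι : Type*} (s : Finset ι) (K : ι → Ideal R)
    (h : ∀ i ∈ s, IsGVIdeal R (K i)) : IsGVIdeal R (∏ i ∈ s, K i) := by
  classical
  induction s using Finset.induction_on with
  | empty => simpa [Ideal.one_eq_top] using (isGV_top : IsGVIdeal R ⊤)
  | @insert a t hni ih =>
    rw [Finset.prod_insert hni]
    exact isGV_mul (h a (Finset.mem_insert_self a t))
      (ih fun i hi => h i (Finset.mem_insert_of_mem hi))

/-- The w-closure of an ideal. -/
def wcl (I : Ideal R) : Ideal R where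
  carrier := {x | ∃ K : Ideal R, IsGVIdeal R K ∧ ∀ k ∈ K, k * x ∈ I}
  zero_mem' := ⟨⊤, isGV_top, by simp⟩
  add_mem' := by
    rintro a b ⟨K₁, h₁, hk₁⟩ ⟨K₂, h₂, hk₂⟩
    refine ⟨K₁ * K₂, isGV_mul h₁ h₂, fun k hk => ?_⟩
    have hmem : k ∈ K₁ ⊓ K₂ := Ideal.mul_le_inf hk
    rw [mul_add]
    exact I.add_mem (hk₁ k hmem.1) (hk₂ k hmem.2)
  smul_mem' := by
    rintro c x ⟨K, h, hk⟩
    refine ⟨K, h, fun k hkm => ?_⟩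
    have : k * (c • x) = c * (k * x) := by rw [smul_eq_mul]; ring
    rw [this]
    exact I.mul_mem_left c (hk k hkm)

lemma le_wcl (I : Ideal R) : I ≤ wcl I :=
  fun x hx => ⟨⊤, isGV_top, fun k _ => I.mul_mem_left k hx⟩

lemma isWIdeal_wcl (I : Ideal R) : IsWIdeal R (wcl I) := by
  classical
  rintro x ⟨K₂, hK₂, h⟩
  obtain ⟨s, hs⟩ := hK₂.1
  have hgen : ∀ g ∈ s, (g : R) * x ∈ wcl I := fun g hg =>
    h g (hs ▸ Submodule.subset_span hg)
  have hch : ∀ g ∈ s, ∃ K : Ideal R, IsGVIdeal R K ∧ ∀ k ∈ K, k * (g * x) ∈ I :=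
    fun g hg => hgen g hg
  choose F hF1 hF2 using hch
  let F' : R → Ideal R := fun g => if hg : g ∈ s then F g hg else ⊤
  have hF'GV : ∀ g ∈ s.attach, IsGVIdeal R (F' g.1) := by
    intro g _
    simp only [F', dif_pos g.2]
    exact hF1 g.1 g.2
  let P : Ideal R := ∏ g ∈ s.attach, F' g.1
  have hPGV : IsGVIdeal R P := isGV_prod _ _ hF'GV
  refine ⟨K₂ * P, isGV_mul hK₂ hPGV, fun k hk => ?_⟩
  refine Submodule.mul_induction_on hk (fun a ha p hp => ?_)
    (fun y z hy hz => by rw [add_mul]; exact I.add_mem hy hz)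
  -- a ∈ K₂ = span s, p ∈ P
  rw [← hs] at ha
  induction ha using Submodule.span_induction with
  | mem g hg =>
    have hpF : p ∈ F g hg := by
      have h1 : P ≤ F' g := le_trans Ideal.prod_le_inf
        (Finset.inf_le (Finset.mem_attach s ⟨g, hg⟩))
      have : F' g = F g hg := dif_pos hg
      rw [← this]
      exact h1 hp
    have := hF2 g hg p hpF
    have he : g * p * x = p * (g * x) := by ring
    rw [he]
    exact this
  | zero => simpa using I.zero_mem
  | add y z _ _ hy hz =>
    have : (y + z) * p * x = y * p * x + z * p * x := by ring
    rw [this]; exact I.add_mem hy hz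
  | smul c y _ hy =>
    have : (c • y) * p * x = c * (y * p * x) := by rw [smul_eq_mul]; ring
    rw [this]; exact I.mul_mem_left c hy

end GVAux

/-- A finitely generated ideal `J` of a commutative ring `R` is a GV-ideal
if and only if `J` is not contained in any maximal w-ideal of `R`. -/
theorem gvIdeal_iff_not_le_maxWIdeal (R : Type u) [CommRing R] (J : Ideal R) (hJ : J.FG) :
    IsGVIdeal R J ↔ ∀ m : Ideal R, IsMaxWIdeal R m → ¬ J ≤ m := by
  constructor
  · intro hGV m hm hle
    refine hm.2.1 (Ideal.eq_top_iff_one m |>.mpr ?_)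
    exact hm.1 1 ⟨J, hGV, fun j hj => by rw [mul_one]; exact hle hj⟩
  · intro h
    by_contra hGV
    -- wcl J is a proper w-ideal
    have hne : wcl J ≠ ⊤ := by
      intro htop
      have h1 : (1 : R) ∈ wcl J := htop ▸ Submodule.mem_top
      obtain ⟨K, hK, hk⟩ := h1
      exact hGV (isGV_of_le hJ hK (fun k hkm => by simpa using hk k hkm))
    -- Zorn
    set S : Set (Ideal R) := {I | IsWIdeal R I ∧ I ≠ ⊤ ∧ wcl J ≤ I} with hS
    have hub : ∀ (c : Set (Ideal R)), DirectedOn (· ≤ ·) c → ∀ y ∈ c,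
        ∀ T : Finset (Ideal R), (∀ I ∈ T, I ∈ c) → ∃ U ∈ c, ∀ I ∈ T, I ≤ U := by
      classical
      intro c hd y hy T
      induction T using Finset.induction_on with
      | empty => exact fun _ => ⟨y, hy, by simp⟩
      | @insert a t hni ih =>
        intro hT
        obtain ⟨U, hUc, hU⟩ := ih fun I hI => hT I (Finset.mem_insert_of_mem hI)
        obtain ⟨V, hVc, haV, hUV⟩ := hd a (hT a (Finset.mem_insert_self a t)) U hUc
        exact ⟨V, hVc, fun I hI => by
          rcases Finset.mem_insert.mp hI with rfl | hI
          · exact haV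
          · exact le_trans (hU I hI) hUV⟩
    have hzorn : ∃ m, wcl J ≤ m ∧ Maximal (· ∈ S) m := by
      refine zorn_le_nonempty₀ S ?_ (wcl J) ⟨isWIdeal_wcl J, hne, le_refl _⟩
      intro c hcS hchain y hyc
      classical
      have hdir : DirectedOn (· ≤ ·) c := hchain.directedOn
      have hcne : c.Nonempty := ⟨y, hyc⟩
      refine ⟨sSup c, ⟨?_, ?_, ?_⟩, fun z hz => le_sSup hz⟩
      · -- sSup of chain of w-ideals is a w-ideal
        rintro x ⟨K, hK, hkx⟩
        obtain ⟨s, hs⟩ := hK.1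
        have hmem : ∀ g ∈ s, ∃ I ∈ c, g * x ∈ I := by
          intro g hg
          have : g * x ∈ sSup c := hkx g (hs ▸ Submodule.subset_span hg)
          exact (Submodule.mem_sSup_of_directed hcne hdir).mp this
        choose G hG1 hG2 using hmem
        let T : Finset (Ideal R) := s.attach.image fun g => G g.1 g.2
        have hTc : ∀ I ∈ T, I ∈ c := by
          intro I hI
          obtain ⟨g, -, rfl⟩ := Finset.mem_image.mp hI
          exact hG1 g.1 g.2
        obtain ⟨U, hUc, hU⟩ := hub c hdir y hyc T hTc
        have hxU : x ∈ U := by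
          refine (hcS hUc).1 x ⟨K, hK, fun j hj => ?_⟩
          rw [← hs] at hj
          induction hj using Submodule.span_induction with
          | mem g hg =>
            exact hU _ (Finset.mem_image.mpr ⟨⟨g, hg⟩, Finset.mem_attach _ _, rfl⟩)
              (hG2 g hg)
          | zero => simpa using U.zero_mem
          | add p q _ _ hp hq => rw [add_mul]; exact U.add_mem hp hq
          | smul c' p _ hp =>
            have : (c' • p) * x = c' * (p * x) := by rw [smul_eq_mul]; ring
            rw [this]; exact U.mul_mem_left c' hp
        exact (Submodule.mem_sSup_of_directed hcne hdir).mpr ⟨U, hUc, hxU⟩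
      · intro htop
        have h1 : (1 : R) ∈ sSup c := htop ▸ Submodule.mem_top
        obtain ⟨I, hIc, hI1⟩ := (Submodule.mem_sSup_of_directed hcne hdir).mp h1
        exact (hcS hIc).2.1 ((Ideal.eq_top_iff_one I).mpr hI1)
      · exact le_trans (hcS hyc).2.2 (le_sSup hyc)
    obtain ⟨m, hlem, hmax⟩ := hzorn
    have hmW : IsMaxWIdeal R m := by
      refine ⟨hmax.1.1, hmax.1.2.1, fun I hIW hIne hmI => ?_⟩
      have hIS : I ∈ S := ⟨hIW, hIne, le_trans hlem hmI⟩
      exact le_antisymm (hmax.2 hIS hmI) hmI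
    exact h m hmW (le_trans (le_wcl J) hlem)
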